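/- Let V ≥ 2, z : Fin V → ℝ, y⁻ ∈ Fin V, η' > 0, and π = σ(z). Define the negative-gradient REINFORCE-updated logits z'_j = z_j + η'·π_{y⁻}·π_j for j ≠ y⁻ and z'_{y⁻} = z_{y⁻} − η'·π_{y⁻}·(1 − π_{y⁻}), and let π' = σ(z'). Then π'_{y⁻} < π_{y⁻}: the probability of the penalized action strictly decreases. -/

import Mathlib

/-- The softmax distribution `σ(z)_i = exp(z_i) / ∑_j exp(z_j)`. -/
noncomputable def softmax {V : ℕ} (z : Fin V → ℝ) (i : Fin V) : ℝ :=
  Real.exp (z i) / ∑ j, Real.exp (z j)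

/-- Negative-gradient REINFORCE update on a penalized action `y⁻`:
`z'_j = z_j + η'·π_{y⁻}·π_j` for `j ≠ y⁻` and `z'_{y⁻} = z_{y⁻} − η'·π_{y⁻}·(1 − π_{y⁻})`.
Then the probability of the penalized action strictly decreases: `π'_{y⁻} < π_{y⁻}`. -/
theorem negative_gradient_decreases_penalized {V : ℕ} (hV : 2 ≤ V)
    (z : Fin V → ℝ) (yneg : Fin V) (η' : ℝ) (hη : 0 < η') :
    let π := softmax z
    let z' : Fin V → ℝ := fun j =>
      if j = yneg then z yneg - η' * (π yneg * (1 - π yneg))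
      else z j + η' * (π yneg * π j)
    softmax z' yneg < softmax z yneg := by
  intro π z'
  have hS : 0 < ∑ j, Real.exp (z j) :=
    Finset.sum_pos (fun j _ => Real.exp_pos _) ⟨yneg, Finset.mem_univ _⟩
  have hS' : 0 < ∑ j, Real.exp (z' j) :=
    Finset.sum_pos (fun j _ => Real.exp_pos _) ⟨yneg, Finset.mem_univ _⟩
  have hπpos : ∀ j, 0 < π j := fun j => div_pos (Real.exp_pos _) hS
  have hπle : π yneg ≤ 1 := by
    show Real.exp (z yneg) / _ ≤ 1
    rw [div_le_one hS]
    exact Finset.single_le_sum (fun j _ => (Real.exp_pos _).le) (Finset.mem_univ yneg)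
  have hzy : z' yneg = z yneg - η' * (π yneg * (1 - π yneg)) := if_pos rfl
  have hzj : ∀ j, j ≠ yneg → z' j = z j + η' * (π yneg * π j) := fun j h => if_neg h
  show Real.exp (z' yneg) / _ < Real.exp (z yneg) / _
  rw [div_lt_div_iff₀ hS' hS, Finset.mul_sum, Finset.mul_sum]
  apply Finset.sum_lt_sum
  · intro j _
    rw [← Real.exp_add, ← Real.exp_add, Real.exp_le_exp]
    by_cases h : j = yneg
    · subst h; rw [hzy]; ring_nf; rfl
    · rw [hzy, hzj j h]
      have h1 : 0 ≤ η' * (π yneg * (1 - π yneg)) :=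
        mul_nonneg hη.le (mul_nonneg (hπpos yneg).le (by linarith))
      have h2 : 0 < η' * (π yneg * π j) := mul_pos hη (mul_pos (hπpos yneg) (hπpos j))
      linarith
  · obtain ⟨j, hj⟩ := Fintype.exists_ne_of_one_lt_card (by simp; omega) yneg
    refine ⟨j, Finset.mem_univ _, ?_⟩
    rw [← Real.exp_add, ← Real.exp_add, Real.exp_lt_exp, hzy, hzj j hj]
    have h1 : 0 ≤ η' * (π yneg * (1 - π yneg)) :=
      mul_nonneg hη.le (mul_nonneg (hπpos yneg).le (by linarith))
    have h2 : 0 < η' * (π yneg * π j) := mul_pos hη (mul_pos (hπpos yneg) (hπpos j))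
    linarith
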